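/- arXiv:2412.06615 — 2 statements merged into one kernel-verified Lean document; each statement's English description precedes it below -/
import Mathlib

section
/- With the setup of a Poisson point process m on (E, ℰ, μ) with intensity r·μ and sets A_x, A_y of finite measure, the covariance Cov(1_{m(A_x) odd}, 1_{m(A_y) odd}) = (e^{-2rμ(A_x Δ A_y)} - e^{-2r(μ(A_x)+μ(A_y))})/4, and this quantity is nonnegative. -/
open Real MeasureTheory ProbabilityTheory
open scoped NNReal ENNReal

lemma poisson_parity_odd (ρ : ℝ≥0) :
    (poissonMeasure ρ {n | Odd n}).toReal = (1 - Real.exp (-(2 * ρ))) / 2 := by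
  have hmeas : MeasurableSet {n : ℕ | Odd n} := (Set.to_countable _).measurableSet
  have key : ∀ n : ℕ, (ENNReal.ofReal (Real.exp (-(ρ : ℝ)) * (ρ : ℝ) ^ n / (n.factorial : ℝ))
      • Measure.dirac n) {n : ℕ | Odd n} = Set.indicator {n : ℕ | Odd n} (⇑(poissonPMF ρ)) n := by
    intro n
    rw [Measure.smul_apply, Measure.dirac_apply' _ hmeas, smul_eq_mul]
    by_cases h : Odd n <;> simp [Set.indicator, h, ← poissonPMFReal_ofReal_eq_poissonPMF, poissonPMFReal]
  rw [poissonMeasure, Measure.sum_apply _ hmeas]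
  simp only [key]
  have happ : ∀ n, (poissonPMF ρ) n = ENNReal.ofReal (poissonPMFReal ρ n) := fun n => rfl
  rw [ENNReal.tsum_toReal_eq (by
    intro n
    by_cases h : Odd n <;> simp [Set.indicator, h, happ])]
  have hcoe : ∀ n, ((Set.indicator {n : ℕ | Odd n} (⇑(poissonPMF ρ)) n)).toReal
      = Set.indicator {n : ℕ | Odd n} (poissonPMFReal ρ) n := by
    intro n
    by_cases h : Odd n <;>
      simp [Set.indicator, h, happ, ENNReal.toReal_ofReal poissonPMFReal_nonneg]
  simp only [hcoe]
  have hinj : Function.Injective (fun k : ℕ => 2 * k + 1) := by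
    intro a b h
    dsimp only at h
    omega
  have hsupp : ∀ n ∉ Set.range (fun k : ℕ => 2 * k + 1),
      Set.indicator {n : ℕ | Odd n} (poissonPMFReal ρ) n = 0 := by
    intro n hn
    have : ¬ Odd n := by
      rintro ⟨k, hk⟩; exact hn ⟨k, by dsimp only; omega⟩
    simp [Set.indicator, this]
  have hcomp : HasSum ((Set.indicator {n : ℕ | Odd n} (poissonPMFReal ρ)) ∘
      (fun k : ℕ => 2 * k + 1)) (Real.exp (-(ρ : ℝ)) * Real.sinh ρ) := by
    have h := (Real.hasSum_sinh (ρ : ℝ)).mul_left (Real.exp (-(ρ : ℝ)))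
    have heq : ((Set.indicator {n : ℕ | Odd n} (poissonPMFReal ρ)) ∘ (fun k : ℕ => 2 * k + 1))
        = fun k : ℕ => Real.exp (-(ρ : ℝ)) * ((ρ : ℝ) ^ (2 * k + 1) / (2 * k + 1).factorial) := by
      funext k
      have : Odd (2 * k + 1) := ⟨k, by omega⟩
      simp [Set.indicator, this, poissonPMFReal, mul_div_assoc]
    rw [heq]
    exact h
  rw [((hinj.hasSum_iff hsupp).mp hcomp).tsum_eq, Real.sinh_eq]
  have h1 : Real.exp (-(ρ : ℝ)) * Real.exp ρ = 1 := by rw [← Real.exp_add]; simp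
  have h2 : Real.exp (-(ρ : ℝ)) * Real.exp (-(ρ : ℝ)) = Real.exp (-(2 * ρ)) := by
    rw [← Real.exp_add]; ring_nf
  linear_combination h1 / 2 - h2 / 2

lemma poisson_parity_even (ρ : ℝ≥0) :
    (poissonMeasure ρ {n | Even n}).toReal = (1 + Real.exp (-(2 * ρ))) / 2 := by
  have hO : MeasurableSet {n : ℕ | Odd n} := (Set.to_countable _).measurableSet
  have hset : {n : ℕ | Even n} = {n : ℕ | Odd n}ᶜ := by
    ext n
    simp [Nat.even_iff, Nat.odd_iff]
  rw [hset, prob_compl_eq_one_sub hO,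
    ENNReal.toReal_sub_of_le prob_le_one ENNReal.one_ne_top,
    ENNReal.toReal_one, poisson_parity_odd]
  ring

/-- For a Poisson point process `m` with intensity `r·μ` and sets `A`, `B` of finite
measure, the counts `U = m(A \ B)`, `V = m(B \ A)`, `W = m(A ∩ B)` are independent
Poisson random variables, `m(A) = U + W` and `m(B) = V + W`. The covariance of the
odd-count indicators is `(e^{-2rμ(A Δ B)} - e^{-2r(μ(A)+μ(B))})/4 ≥ 0`. -/
theorem ppp_odd_cov {E Ω : Type*} [MeasurableSpace E] [MeasurableSpace Ω]
    (μ : Measure E) (P : Measure Ω) [IsProbabilityMeasure P]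
    (A B : Set E) (hA : MeasurableSet A) (hB : MeasurableSet B)
    (hAfin : μ A ≠ ⊤) (hBfin : μ B ≠ ⊤)
    (r : ℝ) (hr : 0 < r)
    (U V W : Ω → ℕ) (hU : Measurable U) (hV : Measurable V) (hW : Measurable W)
    (hIndep : iIndepFun ![U, V, W] P)
    (hlawU : Measure.map U P = poissonMeasure (r * (μ (A \ B)).toReal).toNNReal)
    (hlawV : Measure.map V P = poissonMeasure (r * (μ (B \ A)).toReal).toNNReal)
    (hlawW : Measure.map W P = poissonMeasure (r * (μ (A ∩ B)).toReal).toNNReal) :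
    (P {ω | Odd (U ω + W ω) ∧ Odd (V ω + W ω)}).toReal
        - (P {ω | Odd (U ω + W ω)}).toReal * (P {ω | Odd (V ω + W ω)}).toReal
      = (Real.exp (-2 * r * (μ (symmDiff A B)).toReal)
          - Real.exp (-2 * r * ((μ A).toReal + (μ B).toReal))) / 4 ∧
    0 ≤ (Real.exp (-2 * r * (μ (symmDiff A B)).toReal)
          - Real.exp (-2 * r * ((μ A).toReal + (μ B).toReal))) / 4 := by
  have hO : MeasurableSet {n : ℕ | Odd n} := (Set.to_countable _).measurableSet
  have hE : MeasurableSet {n : ℕ | Even n} := (Set.to_countable _).measurableSet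
  have hABfin : μ (A \ B) ≠ ⊤ := ne_top_of_le_ne_top hAfin (measure_mono Set.diff_subset)
  have hBAfin : μ (B \ A) ≠ ⊤ := ne_top_of_le_ne_top hBfin (measure_mono Set.diff_subset)
  have hIfin : μ (A ∩ B) ≠ ⊤ := ne_top_of_le_ne_top hAfin (measure_mono Set.inter_subset_left)
  set x := (μ (A \ B)).toReal with hxdef
  set y := (μ (B \ A)).toReal with hydef
  set z := (μ (A ∩ B)).toReal with hzdef
  have hx : 0 ≤ x := ENNReal.toReal_nonneg
  have hy : 0 ≤ y := ENNReal.toReal_nonneg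
  have hz : 0 ≤ z := ENNReal.toReal_nonneg
  have hcoeU : ((r * x).toNNReal : ℝ) = r * x := Real.coe_toNNReal _ (mul_nonneg hr.le hx)
  have hcoeV : ((r * y).toNNReal : ℝ) = r * y := Real.coe_toNNReal _ (mul_nonneg hr.le hy)
  have hcoeW : ((r * z).toNNReal : ℝ) = r * z := Real.coe_toNNReal _ (mul_nonneg hr.le hz)
  -- marginal probabilities
  have hPU_O : (P (U ⁻¹' {n | Odd n})).toReal = (1 - Real.exp (-(2 * (r * x)))) / 2 := by
    rw [← Measure.map_apply hU hO, hlawU, poisson_parity_odd, hcoeU]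
  have hPU_E : (P (U ⁻¹' {n | Even n})).toReal = (1 + Real.exp (-(2 * (r * x)))) / 2 := by
    rw [← Measure.map_apply hU hE, hlawU, poisson_parity_even, hcoeU]
  have hPV_O : (P (V ⁻¹' {n | Odd n})).toReal = (1 - Real.exp (-(2 * (r * y)))) / 2 := by
    rw [← Measure.map_apply hV hO, hlawV, poisson_parity_odd, hcoeV]
  have hPV_E : (P (V ⁻¹' {n | Even n})).toReal = (1 + Real.exp (-(2 * (r * y)))) / 2 := by
    rw [← Measure.map_apply hV hE, hlawV, poisson_parity_even, hcoeV]
  have hPW_O : (P (W ⁻¹' {n | Odd n})).toReal = (1 - Real.exp (-(2 * (r * z)))) / 2 := by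
    rw [← Measure.map_apply hW hO, hlawW, poisson_parity_odd, hcoeW]
  have hPW_E : (P (W ⁻¹' {n | Even n})).toReal = (1 + Real.exp (-(2 * (r * z)))) / 2 := by
    rw [← Measure.map_apply hW hE, hlawW, poisson_parity_even, hcoeW]
  -- independence
  have hUW : IndepFun U W P := by
    have h := hIndep.indepFun (i := 0) (j := 2) (by decide)
    simpa using h
  have hVW : IndepFun V W P := by
    have h := hIndep.indepFun (i := 1) (j := 2) (by decide)
    simpa using h
  have htriple : ∀ (s0 s1 s2 : Set ℕ), MeasurableSet s0 → MeasurableSet s1 → MeasurableSet s2 →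
      P (U ⁻¹' s0 ∩ (V ⁻¹' s1 ∩ W ⁻¹' s2)) = P (U ⁻¹' s0) * P (V ⁻¹' s1) * P (W ⁻¹' s2) := by
    intro s0 s1 s2 h0 h1 h2
    have h := hIndep.measure_inter_preimage_eq_mul (S := Finset.univ) (sets := ![s0, s1, s2])
      (fun i _ => by fin_cases i <;> simpa)
    have hset : (⋂ i ∈ (Finset.univ : Finset (Fin 3)), (![U, V, W] i) ⁻¹' (![s0, s1, s2] i))
        = U ⁻¹' s0 ∩ (V ⁻¹' s1 ∩ W ⁻¹' s2) := by
      ext ω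
      simp [Fin.forall_fin_succ]
    rw [hset, Fin.prod_univ_three] at h
    simpa using h
  -- event decompositions
  have hsplitU : {ω | Odd (U ω + W ω)} =
      (U ⁻¹' {n | Odd n} ∩ W ⁻¹' {n | Even n}) ∪ (U ⁻¹' {n | Even n} ∩ W ⁻¹' {n | Odd n}) := by
    ext ω
    simp only [Set.mem_setOf_eq, Set.mem_union, Set.mem_inter_iff, Set.mem_preimage,
      Nat.odd_iff, Nat.even_iff]
    omega
  have hsplitV : {ω | Odd (V ω + W ω)} =
      (V ⁻¹' {n | Odd n} ∩ W ⁻¹' {n | Even n}) ∪ (V ⁻¹' {n | Even n} ∩ W ⁻¹' {n | Odd n}) := by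
    ext ω
    simp only [Set.mem_setOf_eq, Set.mem_union, Set.mem_inter_iff, Set.mem_preimage,
      Nat.odd_iff, Nat.even_iff]
    omega
  have hsplitJ : {ω | Odd (U ω + W ω) ∧ Odd (V ω + W ω)} =
      (U ⁻¹' {n | Odd n} ∩ (V ⁻¹' {n | Odd n} ∩ W ⁻¹' {n | Even n})) ∪
      (U ⁻¹' {n | Even n} ∩ (V ⁻¹' {n | Even n} ∩ W ⁻¹' {n | Odd n})) := by
    ext ω
    simp only [Set.mem_setOf_eq, Set.mem_union, Set.mem_inter_iff, Set.mem_preimage,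
      Nat.odd_iff, Nat.even_iff]
    omega
  have hdisjU : Disjoint (U ⁻¹' {n | Odd n} ∩ W ⁻¹' {n | Even n})
      (U ⁻¹' {n | Even n} ∩ W ⁻¹' {n | Odd n}) := by
    rw [Set.disjoint_left]
    rintro ω ⟨h1, -⟩ ⟨h2, -⟩
    simp only [Set.mem_preimage, Set.mem_setOf_eq, Nat.odd_iff, Nat.even_iff] at h1 h2
    omega
  have hdisjV : Disjoint (V ⁻¹' {n | Odd n} ∩ W ⁻¹' {n | Even n})
      (V ⁻¹' {n | Even n} ∩ W ⁻¹' {n | Odd n}) := by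
    rw [Set.disjoint_left]
    rintro ω ⟨h1, -⟩ ⟨h2, -⟩
    simp only [Set.mem_preimage, Set.mem_setOf_eq, Nat.odd_iff, Nat.even_iff] at h1 h2
    omega
  have hdisjJ : Disjoint (U ⁻¹' {n | Odd n} ∩ (V ⁻¹' {n | Odd n} ∩ W ⁻¹' {n | Even n}))
      (U ⁻¹' {n | Even n} ∩ (V ⁻¹' {n | Even n} ∩ W ⁻¹' {n | Odd n})) := by
    rw [Set.disjoint_left]
    rintro ω ⟨h1, -⟩ ⟨h2, -⟩
    simp only [Set.mem_preimage, Set.mem_setOf_eq, Nat.odd_iff, Nat.even_iff] at h1 h2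
    omega
  have hmulfin : ∀ a b : ℝ≥0∞, a ≠ ⊤ → b ≠ ⊤ → a * b ≠ ⊤ := fun a b ha hb =>
    ENNReal.mul_ne_top ha hb
  have hPUodd : (P {ω | Odd (U ω + W ω)}).toReal
      = (P (U ⁻¹' {n | Odd n})).toReal * (P (W ⁻¹' {n | Even n})).toReal
      + (P (U ⁻¹' {n | Even n})).toReal * (P (W ⁻¹' {n | Odd n})).toReal := by
    rw [hsplitU, measure_union hdisjU ((hU hE).inter (hW hO)),
      hUW.measure_inter_preimage_eq_mul _ _ hO hE,
      hUW.measure_inter_preimage_eq_mul _ _ hE hO,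
      ENNReal.toReal_add (hmulfin _ _ (measure_ne_top _ _) (measure_ne_top _ _))
        (hmulfin _ _ (measure_ne_top _ _) (measure_ne_top _ _)),
      ENNReal.toReal_mul, ENNReal.toReal_mul]
  have hPVodd : (P {ω | Odd (V ω + W ω)}).toReal
      = (P (V ⁻¹' {n | Odd n})).toReal * (P (W ⁻¹' {n | Even n})).toReal
      + (P (V ⁻¹' {n | Even n})).toReal * (P (W ⁻¹' {n | Odd n})).toReal := by
    rw [hsplitV, measure_union hdisjV ((hV hE).inter (hW hO)),
      hVW.measure_inter_preimage_eq_mul _ _ hO hE,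
      hVW.measure_inter_preimage_eq_mul _ _ hE hO,
      ENNReal.toReal_add (hmulfin _ _ (measure_ne_top _ _) (measure_ne_top _ _))
        (hmulfin _ _ (measure_ne_top _ _) (measure_ne_top _ _)),
      ENNReal.toReal_mul, ENNReal.toReal_mul]
  have hPJ : (P {ω | Odd (U ω + W ω) ∧ Odd (V ω + W ω)}).toReal
      = (P (U ⁻¹' {n | Odd n})).toReal * (P (V ⁻¹' {n | Odd n})).toReal
          * (P (W ⁻¹' {n | Even n})).toReal
      + (P (U ⁻¹' {n | Even n})).toReal * (P (V ⁻¹' {n | Even n})).toReal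
          * (P (W ⁻¹' {n | Odd n})).toReal := by
    rw [hsplitJ, measure_union hdisjJ ((hU hE).inter ((hV hE).inter (hW hO))),
      htriple _ _ _ hO hO hE, htriple _ _ _ hE hE hO,
      ENNReal.toReal_add (hmulfin _ _ (hmulfin _ _ (measure_ne_top _ _) (measure_ne_top _ _))
        (measure_ne_top _ _)) (hmulfin _ _ (hmulfin _ _ (measure_ne_top _ _) (measure_ne_top _ _))
        (measure_ne_top _ _)),
      ENNReal.toReal_mul, ENNReal.toReal_mul, ENNReal.toReal_mul, ENNReal.toReal_mul]
  -- measure identities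
  have hsymm : (μ (symmDiff A B)).toReal = x + y := by
    rw [Set.symmDiff_def, measure_union disjoint_sdiff_sdiff (hB.diff hA),
      ENNReal.toReal_add hABfin hBAfin]
  have hmA : (μ A).toReal = x + z := by
    rw [← measure_inter_add_diff A hB, ENNReal.toReal_add hIfin hABfin]
    ring
  have hmB : (μ B).toReal = y + z := by
    rw [← measure_inter_add_diff B hA, Set.inter_comm B A,
      ENNReal.toReal_add hIfin hBAfin]
    ring
  have hab : Real.exp (-2 * r * (x + y))
      = Real.exp (-(2 * (r * x))) * Real.exp (-(2 * (r * y))) := by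
    rw [← Real.exp_add]; congr 1; ring
  have habc : Real.exp (-2 * r * ((x + z) + (y + z)))
      = Real.exp (-(2 * (r * x))) * Real.exp (-(2 * (r * y)))
        * (Real.exp (-(2 * (r * z))) * Real.exp (-(2 * (r * z)))) := by
    rw [← Real.exp_add, ← Real.exp_add, ← Real.exp_add]; congr 1; ring
  constructor
  · rw [hPJ, hPUodd, hPVodd, hPU_O, hPU_E, hPV_O, hPV_E, hPW_O, hPW_E,
      hsymm, hmA, hmB, hab, habc]
    ring
  · rw [hsymm, hmA, hmB]
    have hle : Real.exp (-2 * r * ((x + z) + (y + z))) ≤ Real.exp (-2 * r * (x + y)) := by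
      apply Real.exp_le_exp.mpr
      nlinarith [mul_nonneg hr.le hz]
    linarith
end

section
/- Let f : [0,∞) → ℝ be bounded measurable with ∫₀^∞ |f(s)| ds < ∞ and ∫₁^∞ |f(s)| log s ds < ∞. Then the double integral ∫₀^∞ ∫₀^∞ |f(s) f(t)| |log((s+t)/|s-t|)| ds dt is finite. -/
open Real MeasureTheory

lemma hker_pointwise {x : ℝ} (hx0 : 0 < x) (hx1 : x ≤ 1) :
    max (-Real.log x) 0 ≤ 2 * x ^ (-(1/2) : ℝ) := by
  have hp : 0 < x ^ (-(1/2) : ℝ) := Real.rpow_pos_of_pos hx0 _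
  have hlog : Real.log (x ^ (-(1/2) : ℝ)) = -(1/2) * Real.log x := Real.log_rpow hx0 _
  have h2 : Real.log (x ^ (-(1/2):ℝ)) ≤ x ^ (-(1/2):ℝ) - 1 := Real.log_le_sub_one_of_pos hp
  have h3 : -Real.log x ≤ 2 * x ^ (-(1/2):ℝ) := by nlinarith
  exact max_le h3 (by positivity)

lemma hker_lint : ∫⁻ u : ℝ, ENNReal.ofReal (max (-Real.log |u|) 0) ≠ ⊤ := by
  set g : ℝ → ℝ := fun u => if u ∈ Set.Ioc (0:ℝ) 1 then 2 * u ^ (-(1/2) : ℝ) else 0 with hg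
  have hgmeas : Measurable g := by
    refine Measurable.ite measurableSet_Ioc ?_ measurable_const
    exact Measurable.const_mul (by fun_prop) 2
  have hb : ∀ u : ℝ, ENNReal.ofReal (max (-Real.log |u|) 0)
      ≤ ENNReal.ofReal (g u) + ENNReal.ofReal (g (-u)) := by
    intro u
    rcases lt_trichotomy u 0 with hu | rfl | hu
    · rcases le_or_gt 1 (-u) with h1 | h1
      · have hz : max (-Real.log |u|) 0 = 0 :=
          max_eq_right (neg_nonpos.mpr (Real.log_nonneg (by rwa [abs_of_neg hu])))
        rw [hz]; simp
      · have h0 : 0 < -u := by linarith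
        have hb := hker_pointwise h0 (le_of_lt h1)
        have hgu : g (-u) = 2 * (-u) ^ (-(1/2):ℝ) := if_pos ⟨h0, le_of_lt h1⟩
        rw [abs_of_neg hu]
        calc ENNReal.ofReal (max (-Real.log (-u)) 0) ≤ ENNReal.ofReal (g (-u)) := by
              rw [hgu]; exact ENNReal.ofReal_le_ofReal hb
          _ ≤ _ := le_add_self
    · simp
    · rcases le_or_gt 1 u with h1 | h1
      · have hz : max (-Real.log |u|) 0 = 0 :=
          max_eq_right (neg_nonpos.mpr (Real.log_nonneg (by rwa [abs_of_pos hu])))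
        rw [hz]; simp
      · have hb := hker_pointwise hu (le_of_lt h1)
        have hgu : g u = 2 * u ^ (-(1/2):ℝ) := if_pos ⟨hu, le_of_lt h1⟩
        rw [abs_of_pos hu]
        calc ENNReal.ofReal (max (-Real.log u) 0) ≤ ENNReal.ofReal (g u) := by
              rw [hgu]; exact ENNReal.ofReal_le_ofReal hb
          _ ≤ _ := le_self_add
  have hneg : ∫⁻ u : ℝ, ENNReal.ofReal (g (-u)) = ∫⁻ u : ℝ, ENNReal.ofReal (g u) :=
    (Measure.measurePreserving_neg volume).lintegral_comp hgmeas.ennreal_ofReal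
  have hgfin : ∫⁻ u : ℝ, ENNReal.ofReal (g u) ≠ ⊤ := by
    have hind : ∀ u, ENNReal.ofReal (g u)
        = (Set.Ioc (0:ℝ) 1).indicator (fun u => ENNReal.ofReal (2 * u ^ (-(1/2):ℝ))) u := by
      intro u
      rw [Set.indicator_apply]
      simp only [hg]
      by_cases hu : u ∈ Set.Ioc (0:ℝ) 1
      · rw [if_pos hu, if_pos hu]
      · rw [if_neg hu, if_neg hu, ENNReal.ofReal_zero]
    simp_rw [hind]
    rw [lintegral_indicator measurableSet_Ioc]
    have hint : IntegrableOn (fun u : ℝ => 2 * u ^ (-(1/2):ℝ)) (Set.Ioc 0 1) := by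
      have h := (intervalIntegral.intervalIntegrable_rpow'
        (a := 0) (b := 1) (by norm_num : (-1:ℝ) < -(1/2))).const_mul 2
      rwa [intervalIntegrable_iff_integrableOn_Ioc_of_le zero_le_one] at h
    have hfin : (∫⁻ u in Set.Ioc (0:ℝ) 1, (‖2 * u ^ (-(1/2):ℝ)‖₊ : ENNReal)) < ⊤ := hint.2
    refine ne_top_of_le_ne_top hfin.ne (lintegral_mono fun u => ?_)
    exact Real.ofReal_le_enorm _
  refine ne_top_of_le_ne_top ?_
    ((lintegral_mono hb).trans (le_of_eq (lintegral_add_left hgmeas.ennreal_ofReal _)))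
  rw [hneg]
  exact ENNReal.add_ne_top.mpr ⟨hgfin, hgfin⟩

lemma kernel_bound {s t : ℝ} (hs : 0 < s) (ht : 0 < t) :
    |Real.log ((s + t) / |s - t|)|
      ≤ Real.log (1 + s) + Real.log (1 + t) + max (-Real.log |s - t|) 0 := by
  have h1 : 0 ≤ Real.log (1 + s) := Real.log_nonneg (by linarith)
  have h2 : 0 ≤ Real.log (1 + t) := Real.log_nonneg (by linarith)
  have h3 : (0:ℝ) ≤ max (-Real.log |s - t|) 0 := le_max_right _ _
  rcases eq_or_ne s t with rfl | hne
  · simp only [sub_self, abs_zero, div_zero, Real.log_zero, abs_zero, neg_zero, max_self]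
    linarith
  · have hd : 0 < |s - t| := abs_pos.mpr (sub_ne_zero.mpr hne)
    have hst : 0 < s + t := by linarith
    have hge : |s - t| ≤ s + t := abs_le.mpr ⟨by linarith, by linarith⟩
    have hq1 : 1 ≤ (s + t) / |s - t| := (one_le_div hd).mpr hge
    rw [abs_of_nonneg (Real.log_nonneg hq1), Real.log_div hst.ne' hd.ne']
    have hup : Real.log (s + t) ≤ Real.log (1 + s) + Real.log (1 + t) := by
      rw [← Real.log_mul (by linarith) (by linarith)]
      exact Real.log_le_log hst (by nlinarith)
    have h4 : -Real.log |s - t| ≤ max (-Real.log |s - t|) 0 := le_max_left _ _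
    linarith

lemma logmoment_fin (f : ℝ → ℝ) (hf : Measurable f) (C : ℝ) (hbdd : ∀ s, |f s| ≤ C)
    (hL1 : ∫⁻ s in Set.Ioi (0 : ℝ), ENNReal.ofReal |f s| ≠ ⊤)
    (hlog : ∫⁻ s in Set.Ioi (1 : ℝ), ENNReal.ofReal (|f s| * Real.log s) ≠ ⊤) :
    ∫⁻ s in Set.Ioi (0:ℝ), ENNReal.ofReal (|f s| * Real.log (1 + s)) ≠ ⊤ := by
  have hC : 0 ≤ C := le_trans (abs_nonneg _) (hbdd 0)
  rw [← Set.Ioc_union_Ioi_eq_Ioi (zero_le_one : (0:ℝ) ≤ 1),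
    lintegral_union measurableSet_Ioi (Set.Ioc_disjoint_Ioi le_rfl)]
  refine ENNReal.add_ne_top.mpr ⟨?_, ?_⟩
  · have hle : ∫⁻ s in Set.Ioc (0:ℝ) 1, ENNReal.ofReal (|f s| * Real.log (1 + s))
        ≤ ∫⁻ _ in Set.Ioc (0:ℝ) 1, ENNReal.ofReal (C * Real.log 2) := by
      refine setLIntegral_mono measurable_const fun x hx => ?_
      refine ENNReal.ofReal_le_ofReal (mul_le_mul (hbdd x) ?_ ?_ hC)
      · exact Real.log_le_log (by linarith [hx.1]) (by linarith [hx.2])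
      · exact Real.log_nonneg (by linarith [hx.1])
    refine ne_top_of_le_ne_top ?_ hle
    rw [setLIntegral_const]
    exact ENNReal.mul_ne_top ENNReal.ofReal_ne_top (by simp [Real.volume_Ioc])
  · have hmono : ∫⁻ s in Set.Ioi (1:ℝ), ENNReal.ofReal (|f s| * Real.log (1 + s))
        ≤ ∫⁻ s in Set.Ioi (1:ℝ),
          (ENNReal.ofReal (Real.log 2 * |f s|) + ENNReal.ofReal (|f s| * Real.log s)) := by
      refine setLIntegral_mono ?_ fun x hx => ?_
      · exact ((hf.abs.const_mul _).ennreal_ofReal).add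
          ((hf.abs.mul Real.measurable_log).ennreal_ofReal)
      · have hx1 : (1:ℝ) < x := hx
        have hkey : |f x| * Real.log (1 + x) ≤ Real.log 2 * |f x| + |f x| * Real.log x := by
          have hlog2 : Real.log (1 + x) ≤ Real.log 2 + Real.log x := by
            rw [← Real.log_mul two_ne_zero (by linarith)]
            exact Real.log_le_log (by linarith) (by linarith)
          nlinarith [abs_nonneg (f x)]
        calc ENNReal.ofReal (|f x| * Real.log (1 + x))
            ≤ ENNReal.ofReal (Real.log 2 * |f x| + |f x| * Real.log x) :=
              ENNReal.ofReal_le_ofReal hkey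
          _ ≤ _ := ENNReal.ofReal_add_le
    refine ne_top_of_le_ne_top ?_ hmono
    rw [lintegral_add_left ((hf.abs.const_mul _).ennreal_ofReal)]
    refine ENNReal.add_ne_top.mpr ⟨?_, hlog⟩
    have heq : ∫⁻ s in Set.Ioi (1:ℝ), ENNReal.ofReal (Real.log 2 * |f s|)
        = ENNReal.ofReal (Real.log 2) * ∫⁻ s in Set.Ioi (1:ℝ), ENNReal.ofReal |f s| := by
      simp_rw [ENNReal.ofReal_mul (Real.log_nonneg one_le_two)]
      exact lintegral_const_mul _ hf.abs.ennreal_ofReal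
    rw [heq]
    refine ENNReal.mul_ne_top ENNReal.ofReal_ne_top
      (ne_top_of_le_ne_top hL1 (lintegral_mono_set (Set.Ioi_subset_Ioi zero_le_one)))

theorem log_kernel_double_integral_finite (f : ℝ → ℝ) (hf : Measurable f)
    (C : ℝ) (hbdd : ∀ s, |f s| ≤ C)
    (hL1 : ∫⁻ s in Set.Ioi (0 : ℝ), ENNReal.ofReal |f s| ≠ ⊤)
    (hlog : ∫⁻ s in Set.Ioi (1 : ℝ), ENNReal.ofReal (|f s| * Real.log s) ≠ ⊤) :
    ∫⁻ s in Set.Ioi (0 : ℝ), ∫⁻ t in Set.Ioi (0 : ℝ),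
        ENNReal.ofReal (|f s * f t| * |Real.log ((s + t) / |s - t|)|) ≠ ⊤ := by
  have hC : 0 ≤ C := le_trans (abs_nonneg _) (hbdd 0)
  set h : ℝ → ℝ := fun u => max (-Real.log |u|) 0 with hh
  have hmeas_h : Measurable h :=
    (Real.measurable_log.comp measurable_abs).neg.max measurable_const
  have hIh : ∫⁻ u : ℝ, ENNReal.ofReal (h u) ≠ ⊤ := hker_lint
  set I0 := ∫⁻ t in Set.Ioi (0:ℝ), ENNReal.ofReal |f t| with hI0
  set IL := ∫⁻ t in Set.Ioi (0:ℝ), ENNReal.ofReal (|f t| * Real.log (1 + t)) with hIL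
  have hILne : IL ≠ ⊤ := logmoment_fin f hf C hbdd hL1 hlog
  set Kc := ∫⁻ u : ℝ, ENNReal.ofReal (C * h u) with hKc
  have hKcne : Kc ≠ ⊤ := by
    rw [hKc]
    simp_rw [ENNReal.ofReal_mul hC]
    rw [lintegral_const_mul _ hmeas_h.ennreal_ofReal]
    exact ENNReal.mul_ne_top ENNReal.ofReal_ne_top hIh
  have hfmeas : Measurable fun t => ENNReal.ofReal |f t| := hf.abs.ennreal_ofReal
  have hfLmeas : Measurable fun t => ENNReal.ofReal (|f t| * Real.log (1 + t)) :=
    (hf.abs.mul (Real.measurable_log.comp (measurable_const.add measurable_id))).ennreal_ofReal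
  have inner : ∀ s ∈ Set.Ioi (0:ℝ),
      (∫⁻ t in Set.Ioi (0:ℝ), ENNReal.ofReal (|f s * f t| * |Real.log ((s + t) / |s - t|)|))
      ≤ ENNReal.ofReal (|f s| * Real.log (1 + s)) * I0 + ENNReal.ofReal |f s| * IL
        + ENNReal.ofReal |f s| * Kc := by
    intro s hs
    have hs' : (0:ℝ) < s := hs
    have hmt : Measurable fun t : ℝ => ENNReal.ofReal (|f s| * (C * h (s - t))) :=
      ((measurable_const.mul ((hmeas_h.comp (measurable_const.sub measurable_id)).const_mul
        C))).ennreal_ofReal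
    have hmA : Measurable fun t : ℝ => ENNReal.ofReal ((|f s| * Real.log (1 + s)) * |f t|) :=
      (hf.abs.const_mul _).ennreal_ofReal
    have hmB : Measurable fun t : ℝ => ENNReal.ofReal (|f s| * (|f t| * Real.log (1 + t))) :=
      ((hf.abs.mul (Real.measurable_log.comp
        (measurable_const.add measurable_id))).const_mul _).ennreal_ofReal
    calc ∫⁻ t in Set.Ioi (0:ℝ), ENNReal.ofReal (|f s * f t| * |Real.log ((s + t) / |s - t|)|)
        ≤ ∫⁻ t in Set.Ioi (0:ℝ),
            (ENNReal.ofReal ((|f s| * Real.log (1 + s)) * |f t|)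
             + ENNReal.ofReal (|f s| * (|f t| * Real.log (1 + t)))
             + ENNReal.ofReal (|f s| * (C * h (s - t)))) := by
          refine setLIntegral_mono ((hmA.add hmB).add hmt) fun t ht => ?_
          have ht' : (0:ℝ) < t := ht
          have hk := kernel_bound hs' ht'
          have h1 : 0 ≤ Real.log (1 + s) := Real.log_nonneg (by linarith)
          have h2 : 0 ≤ Real.log (1 + t) := Real.log_nonneg (by linarith)
          have h3 : 0 ≤ h (s - t) := le_max_right _ _
          have hft : |f t| ≤ C := hbdd t
          have hx : |f s * f t| * |Real.log ((s + t) / |s - t|)|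
              ≤ (|f s| * Real.log (1 + s)) * |f t| + |f s| * (|f t| * Real.log (1 + t))
                + |f s| * (C * h (s - t)) := by
            rw [abs_mul]
            have hmain := mul_le_mul_of_nonneg_left hk
              (mul_nonneg (abs_nonneg (f s)) (abs_nonneg (f t)))
            have hCh : |f s| * |f t| * h (s - t) ≤ |f s| * (C * h (s - t)) := by
              rw [mul_assoc]
              exact mul_le_mul_of_nonneg_left
                (mul_le_mul_of_nonneg_right hft h3) (abs_nonneg (f s))
            nlinarith [abs_nonneg (f s), abs_nonneg (f t)]
          calc ENNReal.ofReal (|f s * f t| * |Real.log ((s + t) / |s - t|)|)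
              ≤ ENNReal.ofReal ((|f s| * Real.log (1 + s)) * |f t|
                  + |f s| * (|f t| * Real.log (1 + t)) + |f s| * (C * h (s - t))) :=
                ENNReal.ofReal_le_ofReal hx
            _ ≤ ENNReal.ofReal ((|f s| * Real.log (1 + s)) * |f t|
                  + |f s| * (|f t| * Real.log (1 + t)))
                + ENNReal.ofReal (|f s| * (C * h (s - t))) := ENNReal.ofReal_add_le
            _ ≤ _ := add_le_add_left ENNReal.ofReal_add_le _
      _ = (∫⁻ t in Set.Ioi (0:ℝ), ENNReal.ofReal ((|f s| * Real.log (1 + s)) * |f t|))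
          + (∫⁻ t in Set.Ioi (0:ℝ), ENNReal.ofReal (|f s| * (|f t| * Real.log (1 + t))))
          + ∫⁻ t in Set.Ioi (0:ℝ), ENNReal.ofReal (|f s| * (C * h (s - t))) := by
          rw [lintegral_add_right _ hmt, lintegral_add_left hmA]
      _ ≤ ENNReal.ofReal (|f s| * Real.log (1 + s)) * I0 + ENNReal.ofReal |f s| * IL
          + ENNReal.ofReal |f s| * Kc := by
          refine add_le_add (add_le_add (le_of_eq ?_) (le_of_eq ?_)) ?_
          · have hls : 0 ≤ |f s| * Real.log (1 + s) :=
              mul_nonneg (abs_nonneg _) (Real.log_nonneg (by linarith))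
            simp_rw [ENNReal.ofReal_mul hls]
            exact lintegral_const_mul _ hfmeas
          · simp_rw [ENNReal.ofReal_mul (abs_nonneg (f s))]
            exact lintegral_const_mul _ hfLmeas
          · calc ∫⁻ t in Set.Ioi (0:ℝ), ENNReal.ofReal (|f s| * (C * h (s - t)))
                = ENNReal.ofReal |f s|
                  * ∫⁻ t in Set.Ioi (0:ℝ), ENNReal.ofReal (C * h (s - t)) := by
                  simp_rw [ENNReal.ofReal_mul (abs_nonneg (f s))]
                  exact lintegral_const_mul _
                    ((hmeas_h.comp (measurable_const.sub measurable_id)).const_mul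
                      C).ennreal_ofReal
              _ ≤ ENNReal.ofReal |f s| * ∫⁻ t : ℝ, ENNReal.ofReal (C * h (s - t)) := by
                  gcongr
                  exact Measure.restrict_le_self
              _ = ENNReal.ofReal |f s| * Kc := by
                  congr 1
                  have hmp : MeasurePreserving (fun t : ℝ => s - t) volume volume := by
                    simp_rw [sub_eq_add_neg]
                    exact (measurePreserving_add_left volume s).comp
                      (Measure.measurePreserving_neg volume)
                  exact hmp.lintegral_comp ((hmeas_h.const_mul C).ennreal_ofReal)
  have hsum : ∫⁻ s in Set.Ioi (0 : ℝ), ∫⁻ t in Set.Ioi (0 : ℝ),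
        ENNReal.ofReal (|f s * f t| * |Real.log ((s + t) / |s - t|)|)
      ≤ ∫⁻ s in Set.Ioi (0:ℝ),
        (ENNReal.ofReal (|f s| * Real.log (1 + s)) * I0 + ENNReal.ofReal |f s| * IL
          + ENNReal.ofReal |f s| * Kc) := by
    refine setLIntegral_mono ?_ inner
    exact ((hfLmeas.mul_const _).add (hfmeas.mul_const _)).add (hfmeas.mul_const _)
  refine ne_top_of_le_ne_top ?_ hsum
  rw [lintegral_add_right _ (hfmeas.mul_const _),
    lintegral_add_left (hfLmeas.mul_const _),
    lintegral_mul_const _ hfLmeas, lintegral_mul_const _ hfmeas, lintegral_mul_const _ hfmeas]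
  refine ENNReal.add_ne_top.mpr ⟨ENNReal.add_ne_top.mpr ⟨?_, ?_⟩, ?_⟩
  · exact ENNReal.mul_ne_top hILne hL1
  · exact ENNReal.mul_ne_top hL1 hILne
  · exact ENNReal.mul_ne_top hL1 hKcne
end
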